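/- Let A be a unital C*-algebra with triple product {x,y,z} = (xy*z + zy*x)/2 and Jordan product x∘y = (xy + yx)/2, and let P : A → A be a linear projection satisfying the conditional expectation formulas P{Px,Py,Pz} = P{Px,y,Pz} = P{x,Py,Pz} for all x,y,z ∈ A, whose range R = P(A) is closed under the adjoint and under the Jordan product, and such that e := P(1) satisfies e = e* and ex = xe = x for all x ∈ R. Then P(a∘x) = P(a)∘x for all a ∈ A and all x ∈ R. -/
import Mathlib


variable {A : Type*} [CStarAlgebra A]

/-- The Jordan triple product `{x,y,z} = (xy*z + zy*x)/2` of a C*-algebra. -/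
noncomputable def tp (x y z : A) : A := (2:ℂ)⁻¹ • (x * star y * z + z * star y * x)

/-- The Jordan product `x∘y = (xy + yx)/2` of a C*-algebra. -/
noncomputable def jp (x y : A) : A := (2:ℂ)⁻¹ • (x * y + y * x)

/-- Let `P` be a linear projection on a unital C*-algebra `A`
satisfying the conditional expectation formulas, whose range `R = P(A)` is
closed under the adjoint and the Jordan product, and such that `e = P(1)` is
self-adjoint and is a unit for `R`.  Then `P(a∘x) = P(a)∘x` for all `a ∈ A`
and `x ∈ R`. -/
theorem stmt_11 (P : A →ₗ[ℂ] A)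
    (hproj : ∀ x, P (P x) = P x)
    (hce1 : ∀ x y z : A, P (tp (P x) (P y) (P z)) = P (tp (P x) y (P z)))
    (hce2 : ∀ x y z : A, P (tp (P x) (P y) (P z)) = P (tp x (P y) (P z)))
    (hstar : ∀ x ∈ Set.range P, star x ∈ Set.range P)
    (hjp : ∀ x ∈ Set.range P, ∀ y ∈ Set.range P, jp x y ∈ Set.range P)
    (hesa : P 1 = star (P 1))
    (heunit : ∀ x ∈ Set.range P, P 1 * x = x ∧ x * P 1 = x) :
    ∀ (a : A), ∀ x ∈ Set.range P, P (jp a x) = jp (P a) x := by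
  intro a x hx
  obtain ⟨w, hw⟩ := hx
  have hPx : P x = x := by rw [← hw, hproj]
  have hxR : x ∈ Set.range P := ⟨w, hw⟩
  have hPaR : P a ∈ Set.range P := ⟨a, rfl⟩
  have hse : star (P 1) = P 1 := hesa.symm
  -- {a, e, x} = a ∘ x
  have h1 : tp a (P 1) x = jp a x := by
    unfold tp jp
    rw [hse, mul_assoc, (heunit x hxR).1, (heunit x hxR).2]
  -- {Pa, e, x} = Pa ∘ x
  have h2 : tp (P a) (P 1) x = jp (P a) x := by
    unfold tp jp
    rw [hse, (heunit (P a) hPaR).2, (heunit x hxR).2]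
  have key := hce2 a 1 w
  rw [hw] at key
  -- key : P (tp (P a) (P 1) x) = P (tp a (P 1) x)
  have hjR : jp (P a) x ∈ Set.range P := hjp (P a) hPaR x hxR
  obtain ⟨u, hu⟩ := hjR
  calc P (jp a x) = P (tp a (P 1) x) := by rw [h1]
    _ = P (tp (P a) (P 1) x) := key.symm
    _ = P (jp (P a) x) := by rw [h2]
    _ = jp (P a) x := by rw [← hu, hproj]
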